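/- Let A and X be finite nonempty sets, let δ ≥ 0, and let d_in, d_out ≥ 1. Let μ : A × X → ℝ be nonnegative with Σ_{a,x} μ(a,x) = 1, and for each (a,x) let ρ_{a,x} be a positive semidefinite complex d_in × d_in matrix with trace 1. Let Φ be a linear map from d_in × d_in complex matrices to d_out × d_out complex matrices, and let F be the completely mixing channel F(σ) = (tr σ / d_out)·I. Assume that for every (a,x) the trace norm satisfies ‖Φ(ρ_{a,x}) − F(ρ_{a,x})‖₁ ≤ δ. Then for every family of matrices Π(x,a) (x ∈ X, a ∈ A) such that each Π(x,a) is positive semidefinite and Σ_{a∈A} Π(x,a) = I for every x, one has Σ_{a,x} μ(a,x) · Re tr(Π(x,a) · Φ(ρ_{a,x})) ≤ Σ_{x∈X} max_{a∈A} μ(a,x) + δ. -/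

import Mathlib

open ComplexOrder

/-- The trace norm of a complex square matrix: `‖M‖₁ = tr((M*M)^{1/2})`,
taking the real part of the trace of the positive semidefinite square root of `Mᴴ * M`. -/
noncomputable def traceNorm {n : ℕ} (M : Matrix (Fin n) (Fin n) ℂ) : ℝ :=
  ((Matrix.posSemidef_conjTranspose_mul_self M).1.eigenvectorUnitary.1 *
    Matrix.diagonal (((↑) : ℝ → ℂ) ∘ (√·) ∘ (Matrix.posSemidef_conjTranspose_mul_self M).1.eigenvalues) *
    (star (Matrix.posSemidef_conjTranspose_mul_self M).1.eigenvectorUnitary :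
      Matrix (Fin n) (Fin n) ℂ)).trace.re

section Aux
open Matrix
open scoped ComplexInnerProductSpace

variable {n : ℕ}

lemma trace_eq_sum_eigenvalues {A : Matrix (Fin n) (Fin n) ℂ} (hA : A.IsHermitian) :
    A.trace = ∑ i, (hA.eigenvalues i : ℂ) := by
  conv_lhs => rw [hA.spectral_theorem]
  rw [Unitary.conjStarAlgAut_apply, Matrix.trace_mul_cycle, Matrix.mem_unitaryGroup_iff'.mp
    hA.eigenvectorUnitary.2, Matrix.one_mul, Matrix.trace_diagonal]
  simp

private lemma diag_conj_entry (U N : Matrix (Fin n) (Fin n) ℂ) (i : Fin n) :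
    (star U * N * U) i i = dotProduct (star fun j => U j i) (N *ᵥ fun j => U j i) := by
  simp only [Matrix.mul_apply, Matrix.mulVec, dotProduct, Matrix.star_apply,
    Pi.star_apply, Finset.sum_mul, Finset.mul_sum]
  rw [Finset.sum_comm]
  exact Finset.sum_congr rfl fun j _ => Finset.sum_congr rfl fun k _ => by ring

private lemma sqrtAux_spec {A : Matrix (Fin n) (Fin n) ℂ} (hA : A.PosSemidef) :
    (hA.1.eigenvectorUnitary.1 * Matrix.diagonal (((↑) : ℝ → ℂ) ∘ (√·) ∘ hA.1.eigenvalues) *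
      (star hA.1.eigenvectorUnitary : Matrix (Fin n) (Fin n) ℂ)).PosSemidef ∧
    (hA.1.eigenvectorUnitary.1 * Matrix.diagonal (((↑) : ℝ → ℂ) ∘ (√·) ∘ hA.1.eigenvalues) *
      (star hA.1.eigenvectorUnitary : Matrix (Fin n) (Fin n) ℂ)) *
    (hA.1.eigenvectorUnitary.1 * Matrix.diagonal (((↑) : ℝ → ℂ) ∘ (√·) ∘ hA.1.eigenvalues) *
      (star hA.1.eigenvectorUnitary : Matrix (Fin n) (Fin n) ℂ)) = A := by
  set U : Matrix (Fin n) (Fin n) ℂ := hA.1.eigenvectorUnitary.1 with hU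
  set D := Matrix.diagonal (((↑) : ℝ → ℂ) ∘ (√·) ∘ hA.1.eigenvalues) with hD
  have hUU : star U * U = 1 := Matrix.mem_unitaryGroup_iff'.mp hA.1.eigenvectorUnitary.2
  refine ⟨?_, ?_⟩
  · have h0 : (0 : Fin n → ℂ) ≤ ((↑) : ℝ → ℂ) ∘ (√·) ∘ hA.1.eigenvalues := fun i =>
      Complex.zero_le_real.mpr (Real.sqrt_nonneg _)
    have := (Matrix.PosSemidef.diagonal h0).mul_mul_conjTranspose_same U
    rwa [← Matrix.star_eq_conjTranspose] at this
  · calc U * D * star U * (U * D * star U) = U * (D * (star U * U) * D) * star U := by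
          simp only [mul_assoc]
      _ = U * Matrix.diagonal (RCLike.ofReal ∘ hA.1.eigenvalues) * star U := by
          rw [hUU, Matrix.mul_one, hD, Matrix.diagonal_mul_diagonal]
          congr 3
          funext i
          simp [← Complex.ofReal_mul, Real.mul_self_sqrt (hA.eigenvalues_nonneg i)]
      _ = A := by
          conv_rhs => rw [hA.1.spectral_theorem]
          rw [Unitary.conjStarAlgAut_apply]

private lemma sub_sq_posSemidef {Q : Matrix (Fin n) (Fin n) ℂ}
    (hQ : Q.PosSemidef) (hQ1 : (1 - Q).PosSemidef) : (Q - Q * Q).PosSemidef := by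
  obtain ⟨S, hS, h3⟩ : ∃ S : Matrix (Fin n) (Fin n) ℂ, S.PosSemidef ∧ S * S = Q :=
    ⟨_, (sqrtAux_spec hQ).1, (sqrtAux_spec hQ).2⟩
  have h := hQ1.mul_mul_conjTranspose_same S
  rw [hS.1] at h
  have heq : S * (1 - Q) * S = Q - Q * Q := by rw [← h3]; noncomm_ring
  rwa [heq] at h

lemma re_trace_mul_le_traceNorm (Q M : Matrix (Fin n) (Fin n) ℂ)
    (hQ : Q.PosSemidef) (hQ1 : (1 - Q).PosSemidef) :
    (Q * M).trace.re ≤ traceNorm M := by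
  classical
  set P := ((Matrix.posSemidef_conjTranspose_mul_self M).1.eigenvectorUnitary.1 *
    Matrix.diagonal (((↑) : ℝ → ℂ) ∘ (√·) ∘ (Matrix.posSemidef_conjTranspose_mul_self M).1.eigenvalues) *
    (star (Matrix.posSemidef_conjTranspose_mul_self M).1.eigenvectorUnitary :
      Matrix (Fin n) (Fin n) ℂ)) with hPdef
  have hP : P.PosSemidef := (sqrtAux_spec (Matrix.posSemidef_conjTranspose_mul_self M)).1
  have hPP : P * P = Mᴴ * M := (sqrtAux_spec (Matrix.posSemidef_conjTranspose_mul_self M)).2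
  have hPH : P.IsHermitian := hP.1
  set U : Matrix (Fin n) (Fin n) ℂ := (hPH.eigenvectorUnitary : Matrix (Fin n) (Fin n) ℂ) with hUdef
  have hU : U * star U = 1 := Matrix.mem_unitaryGroup_iff.mp hPH.eigenvectorUnitary.2
  set v : Fin n → (Fin n → ℂ) := fun i => ⇑(hPH.eigenvectorBasis i) with hvdef
  have hcol : ∀ i, (fun j => U j i) = v i := by
    intro i; funext j; exact hPH.eigenvectorUnitary_apply j i
  have hvv : ∀ i, dotProduct (star (v i)) (v i) = 1 := by
    intro i
    have h1 : ⟪hPH.eigenvectorBasis i, hPH.eigenvectorBasis i⟫ = 1 := by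
      rw [inner_self_eq_norm_sq_to_K, hPH.eigenvectorBasis.orthonormal.1 i]
      norm_num
    rw [← h1, EuclideanSpace.inner_eq_star_dotProduct]
    exact dotProduct_comm _ _
  have htr : ∀ N : Matrix (Fin n) (Fin n) ℂ, N.trace = (star U * N * U).trace := by
    intro N
    rw [Matrix.trace_mul_cycle, hU, Matrix.one_mul]
  set σ : Fin n → ℝ := fun i => hPH.eigenvalues i with hσdef
  have hσ0 : ∀ i, 0 ≤ σ i := fun i => hP.eigenvalues_nonneg i
  have hPv : ∀ i, P *ᵥ v i = σ i • v i := fun i => hPH.mulVec_eigenvectorBasis i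
  have hterm : ∀ i, (dotProduct (star (v i)) ((Q * M) *ᵥ v i)).re ≤ σ i := by
    intro i
    set w : Fin n → ℂ := M *ᵥ v i with hwdef
    set xq : EuclideanSpace ℂ (Fin n) := (WithLp.equiv 2 (Fin n → ℂ)).symm (Q *ᵥ v i) with hxq
    set xw : EuclideanSpace ℂ (Fin n) := (WithLp.equiv 2 (Fin n → ℂ)).symm w with hxw
    have h1 : dotProduct (star (v i)) ((Q * M) *ᵥ v i) = ⟪xq, xw⟫ := by
      rw [hxq, hxw, WithLp.equiv_symm_apply, EuclideanSpace.inner_toLp_toLp, dotProduct_comm _ (star _), Matrix.star_mulVec, hQ.1,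
        ← Matrix.dotProduct_mulVec, hwdef, Matrix.mulVec_mulVec]
    have hxq1 : ‖xq‖ ≤ 1 := by
      have hsq : ⟪xq, xq⟫ = dotProduct (star (v i)) ((Q * Q) *ᵥ v i) := by
        rw [hxq, WithLp.equiv_symm_apply, EuclideanSpace.inner_toLp_toLp, dotProduct_comm _ (star _), Matrix.star_mulVec, hQ.1,
          ← Matrix.dotProduct_mulVec, Matrix.mulVec_mulVec]
      have hle1 : dotProduct (star (v i)) ((Q * Q) *ᵥ v i)
          ≤ dotProduct (star (v i)) (Q *ᵥ v i) := by
        have h0 := (sub_sq_posSemidef hQ hQ1).dotProduct_mulVec_nonneg (v i)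
        rw [Matrix.sub_mulVec, dotProduct_sub] at h0
        exact sub_nonneg.mp h0
      have hle2 : dotProduct (star (v i)) (Q *ᵥ v i)
          ≤ dotProduct (star (v i)) (v i) := by
        have h0 := hQ1.dotProduct_mulVec_nonneg (v i)
        rw [Matrix.sub_mulVec, Matrix.one_mulVec, dotProduct_sub] at h0
        exact sub_nonneg.mp h0
      have h3 : (⟪xq, xq⟫ : ℂ) ≤ 1 := by
        rw [hsq, ← hvv i]; exact hle1.trans hle2
      have hnorm : ‖xq‖ ^ 2 ≤ 1 := by
        rw [← inner_self_eq_norm_sq (𝕜 := ℂ) xq, RCLike.re_to_complex]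
        simpa using (Complex.le_def.mp h3).1
      nlinarith [norm_nonneg xq]
    have hxwσ : ‖xw‖ ≤ σ i := by
      have hsq : (⟪xw, xw⟫ : ℂ) = (σ i : ℂ) ^ 2 := by
        rw [hxw, WithLp.equiv_symm_apply, EuclideanSpace.inner_toLp_toLp, dotProduct_comm _ (star _), hwdef, Matrix.star_mulVec,
          ← Matrix.dotProduct_mulVec, Matrix.mulVec_mulVec, ← hPP,
          ← Matrix.mulVec_mulVec, hPv i, Matrix.mulVec_smul, hPv i,
          dotProduct_smul, dotProduct_smul, hvv i]
        simp [Complex.real_smul]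
        ring
      have hnorm : ‖xw‖ ^ 2 = σ i ^ 2 := by
        have h6 := inner_self_eq_norm_sq (𝕜 := ℂ) xw
        rw [hsq] at h6
        rw [← h6, RCLike.re_to_complex, ← Complex.ofReal_pow, Complex.ofReal_re]
      nlinarith [norm_nonneg xw, hσ0 i]
    have h4 : (⟪xq, xw⟫ : ℂ).re ≤ ‖xq‖ * ‖xw‖ := by
      calc (⟪xq, xw⟫ : ℂ).re ≤ ‖(⟪xq, xw⟫ : ℂ)‖ := Complex.re_le_norm _
        _ = ‖(⟪xq, xw⟫ : ℂ)‖ := rfl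
        _ ≤ ‖xq‖ * ‖xw‖ := norm_inner_le_norm xq xw
    rw [h1]
    calc (⟪xq, xw⟫ : ℂ).re ≤ ‖xq‖ * ‖xw‖ := h4
      _ ≤ 1 * σ i := mul_le_mul hxq1 hxwσ (norm_nonneg _) zero_le_one
      _ = σ i := one_mul _
  -- assemble
  have hTN : traceNorm M = ∑ i, σ i := by
    rw [traceNorm, ← hPdef, trace_eq_sum_eigenvalues hPH]
    rw [show (∑ i, (hPH.eigenvalues i : ℂ)) = ((∑ i, σ i : ℝ) : ℂ) by push_cast; rfl,
      Complex.ofReal_re]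
  have hsum : (Q * M).trace = ∑ i, dotProduct (star (v i)) ((Q * M) *ᵥ v i) := by
    rw [htr (Q * M), Matrix.trace]
    refine Finset.sum_congr rfl fun i _ => ?_
    rw [Matrix.diag_apply, diag_conj_entry, hcol i]
  rw [hsum, hTN, Complex.re_sum]
  exact Finset.sum_le_sum fun i _ => hterm i

lemma posSemidef_finset_sum {ι : Type*} (s : Finset ι) (f : ι → Matrix (Fin n) (Fin n) ℂ)
    (h : ∀ i ∈ s, (f i).PosSemidef) : (∑ i ∈ s, f i).PosSemidef := by
  classical
  induction s using Finset.induction_on with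
  | empty => simpa using Matrix.PosSemidef.zero
  | @insert a s hx ih =>
      rw [Finset.sum_insert hx]
      exact ((h _ (Finset.mem_insert_self _ _)).add
        (ih fun i hi => h i (Finset.mem_insert_of_mem hi)))

lemma trace_re_nonneg {A : Matrix (Fin n) (Fin n) ℂ} (hA : A.PosSemidef) :
    0 ≤ A.trace.re := by
  rw [trace_eq_sum_eigenvalues hA.1]
  rw [show (∑ i, (hA.1.eigenvalues i : ℂ)) = ((∑ i, hA.1.eigenvalues i : ℝ) : ℂ) by push_cast; rfl]
  rw [Complex.ofReal_re]
  exact Finset.sum_nonneg fun i _ => hA.eigenvalues_nonneg i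

end Aux

/-- Reduction of an attacker with a `δ`-noisy quantum memory to one with no quantum memory:
`P_guess(A | X Φ(Q)) ≤ P_guess(A | X) + δ`. -/
theorem guessing_probability_noisy_memory_reduction
    {A X : Type*} [Fintype A] [Fintype X] [Nonempty A] [Nonempty X]
    (δ : ℝ) (hδ : 0 ≤ δ) (d_in d_out : ℕ) (hdin : 1 ≤ d_in) (hdout : 1 ≤ d_out)
    (μ : A × X → ℝ) (hμ0 : ∀ p, 0 ≤ μ p) (hμ1 : ∑ p : A × X, μ p = 1)
    (ρ : A × X → Matrix (Fin d_in) (Fin d_in) ℂ)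
    (hρpsd : ∀ p, (ρ p).PosSemidef) (hρtr : ∀ p, (ρ p).trace = 1)
    (Φ : Matrix (Fin d_in) (Fin d_in) ℂ →ₗ[ℂ] Matrix (Fin d_out) (Fin d_out) ℂ)
    (F : Matrix (Fin d_in) (Fin d_in) ℂ → Matrix (Fin d_out) (Fin d_out) ℂ)
    (hF : ∀ σ, F σ = (σ.trace / (d_out : ℂ)) • (1 : Matrix (Fin d_out) (Fin d_out) ℂ))
    (hΦF : ∀ p : A × X, traceNorm (Φ (ρ p) - F (ρ p)) ≤ δ)
    (Pov : X → A → Matrix (Fin d_out) (Fin d_out) ℂ)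
    (hPovPsd : ∀ x a, (Pov x a).PosSemidef)
    (hPovSum : ∀ x, ∑ a : A, Pov x a = 1) :
    ∑ p : A × X, μ p * (Pov p.2 p.1 * Φ (ρ p)).trace.re
      ≤ (∑ x : X, Finset.univ.sup' Finset.univ_nonempty fun a => μ (a, x)) + δ := by
  classical
  have hd0 : (0:ℝ) < d_out := by exact_mod_cast hdout
  have hone : ∀ x a, ((1 : Matrix (Fin d_out) (Fin d_out) ℂ) - Pov x a).PosSemidef := by
    intro x a
    have h : (1 : Matrix (Fin d_out) (Fin d_out) ℂ) - Pov x a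
        = ∑ a' ∈ Finset.univ.erase a, Pov x a' := by
      rw [← hPovSum x, ← Finset.add_sum_erase _ _ (Finset.mem_univ a)]
      abel
    rw [h]
    exact posSemidef_finset_sum _ _ fun i _ => hPovPsd x i
  have hsplit : ∀ p : A × X, (Pov p.2 p.1 * Φ (ρ p)).trace.re
      = (Pov p.2 p.1).trace.re / d_out + (Pov p.2 p.1 * (Φ (ρ p) - F (ρ p))).trace.re := by
    intro p
    have h1 : Pov p.2 p.1 * Φ (ρ p)
        = Pov p.2 p.1 * F (ρ p) + Pov p.2 p.1 * (Φ (ρ p) - F (ρ p)) := by noncomm_ring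
    have h2 : Pov p.2 p.1 * F (ρ p) = ((d_out:ℂ))⁻¹ • Pov p.2 p.1 := by
      rw [hF, hρtr, Matrix.mul_smul, Matrix.mul_one, one_div]
    have h3 : (Pov p.2 p.1 * F (ρ p)).trace.re = (Pov p.2 p.1).trace.re / d_out := by
      rw [h2, Matrix.trace_smul, smul_eq_mul,
        show ((d_out:ℂ))⁻¹ = (((d_out:ℝ)⁻¹ : ℝ) : ℂ) by push_cast; rfl,
        Complex.mul_re, Complex.ofReal_re, Complex.ofReal_im]
      ring
    rw [h1, Matrix.trace_add, Complex.add_re, h3]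
  have step1 : ∑ p : A × X, μ p * (Pov p.2 p.1 * Φ (ρ p)).trace.re
      = (∑ p : A × X, μ p * ((Pov p.2 p.1).trace.re / d_out))
        + ∑ p : A × X, μ p * (Pov p.2 p.1 * (Φ (ρ p) - F (ρ p))).trace.re := by
    rw [← Finset.sum_add_distrib]
    refine Finset.sum_congr rfl fun p _ => ?_
    rw [hsplit p]; ring
  have part2 : ∑ p : A × X, μ p * (Pov p.2 p.1 * (Φ (ρ p) - F (ρ p))).trace.re ≤ δ := by
    calc ∑ p : A × X, μ p * (Pov p.2 p.1 * (Φ (ρ p) - F (ρ p))).trace.re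
        ≤ ∑ p : A × X, μ p * δ := by
          refine Finset.sum_le_sum fun p _ => ?_
          exact mul_le_mul_of_nonneg_left
            ((re_trace_mul_le_traceNorm _ _ (hPovPsd p.2 p.1) (hone p.2 p.1)).trans (hΦF p))
            (hμ0 p)
      _ = δ := by rw [← Finset.sum_mul, hμ1, one_mul]
  have part1 : ∑ p : A × X, μ p * ((Pov p.2 p.1).trace.re / d_out)
      ≤ ∑ x : X, Finset.univ.sup' Finset.univ_nonempty fun a => μ (a, x) := by
    rw [Fintype.sum_prod_type, Finset.sum_comm]
    refine Finset.sum_le_sum fun x _ => ?_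
    have hc0 : ∀ a, 0 ≤ (Pov x a).trace.re / d_out := fun a =>
      div_nonneg (trace_re_nonneg (hPovPsd x a)) hd0.le
    have hcsum : ∑ a : A, (Pov x a).trace.re / d_out = 1 := by
      rw [← Finset.sum_div]
      have htr : ∑ a : A, (Pov x a).trace.re = (d_out : ℝ) := by
        rw [← Complex.re_sum, ← Matrix.trace_sum, hPovSum x, Matrix.trace_one]
        simp
      rw [htr, div_self hd0.ne']
    calc ∑ a : A, μ (a, x) * ((Pov x a).trace.re / d_out)
        ≤ ∑ a : A, (Finset.univ.sup' Finset.univ_nonempty fun a => μ (a, x))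
            * ((Pov x a).trace.re / d_out) := by
          refine Finset.sum_le_sum fun a _ => ?_
          exact mul_le_mul_of_nonneg_right
            (Finset.le_sup' (fun a => μ (a, x)) (Finset.mem_univ a)) (hc0 a)
      _ = Finset.univ.sup' Finset.univ_nonempty fun a => μ (a, x) := by
          rw [← Finset.mul_sum, hcsum, mul_one]
  rw [step1]
  exact add_le_add part1 part2
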